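/- Let n and k be integers with n/2 ≤ k ≤ n−2 and let G be a connected simple graph on n vertices with minimum degree at least k. Then R'(G) ≥ n/2 − (n²/8)·(1/k − 1/(n−1)). -/

import Mathlib

open scoped Classical

open Finset

/-- The variation of the Randić index: `R'(G) = ∑_{uv ∈ E(G)} 1 / max(d(u), d(v))`. -/
noncomputable def Rvar {V : Type*} [Fintype V] (G : SimpleGraph V) : ℝ :=
  ∑ e ∈ G.edgeFinset,
    Sym2.lift ⟨fun u v => (1 : ℝ) / (max (G.degree u) (G.degree v) : ℕ),
      fun u v => by dsimp only; rw [max_comm]⟩ e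

/-- minimum degree of the endpoints of an edge -/
noncomputable def mnd {V : Type*} [Fintype V] (G : SimpleGraph V) : Sym2 V → ℕ :=
  Sym2.lift ⟨fun u v => min (G.degree u) (G.degree v),
    fun u v => by dsimp only; rw [min_comm]⟩

/-- maximum degree of the endpoints of an edge -/
noncomputable def mxd {V : Type*} [Fintype V] (G : SimpleGraph V) : Sym2 V → ℕ :=
  Sym2.lift ⟨fun u v => max (G.degree u) (G.degree v),
    fun u v => by dsimp only; rw [max_comm]⟩

lemma telescope_aux (g : ℕ → ℝ) {a b : ℕ} (h : a ≤ b) :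
    ∑ t ∈ Finset.Ico a b, (g t - g (t + 1)) = g a - g b := by
  induction b, h using Nat.le_induction with
  | base => simp
  | succ b hb ih => rw [Finset.sum_Ico_succ_top hb, ih]; ring

/-- Weighted handshake: `∑_{uv ∈ E} (w u + w v) = ∑_v deg v * w v`. -/
lemma sum_edge_weights {V : Type*} [Fintype V] (G : SimpleGraph V) (w : V → ℝ) :
    ∑ e ∈ G.edgeFinset,
      Sym2.lift ⟨fun u v => w u + w v, fun u v => by dsimp only; ring⟩ e
      = ∑ v, (G.degree v : ℝ) * w v := by
  have h1 : ∑ d : G.Dart, w d.fst = ∑ v, (G.degree v : ℝ) * w v := by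
    rw [← Finset.sum_fiberwise Finset.univ (fun d : G.Dart => d.fst) (fun d => w d.fst)]
    refine Finset.sum_congr rfl fun v _ => ?_
    rw [Finset.sum_congr rfl (fun d hd => by rw [(Finset.mem_filter.mp hd).2]),
      Finset.sum_const]
    have hcard : (Finset.univ.filter fun d : G.Dart => d.fst = v).card = G.degree v :=
      G.dart_fst_fiber_card_eq_degree v
    rw [hcard, nsmul_eq_mul]
  rw [← h1,
    ← Finset.sum_fiberwise_of_maps_to (s := Finset.univ) (t := G.edgeFinset)
      (g := fun d : G.Dart => d.edge)
      (fun d _ => by rw [SimpleGraph.mem_edgeFinset]; exact d.edge_mem)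
      (fun d : G.Dart => w d.fst)]
  refine Finset.sum_congr rfl fun e he => ?_
  rw [SimpleGraph.mem_edgeFinset] at he
  revert he
  refine Sym2.ind (fun u v he => ?_) e
  rw [SimpleGraph.mem_edgeSet] at he
  have hfib : (Finset.univ.filter fun d : G.Dart => d.edge = s(u, v))
      = {(⟨(u, v), he⟩ : G.Dart), (⟨(u, v), he⟩ : G.Dart).symm} := by
    have := SimpleGraph.Dart.edge_fiber (⟨(u, v), he⟩ : G.Dart)
    convert this using 0
    congr! 2 with d
  rw [Sym2.lift_mk, hfib, Finset.sum_pair (SimpleGraph.Dart.symm_ne _).symm]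
  rfl

lemma cut_card_le {V : Type*} [Fintype V] (G : SimpleGraph V) (t : ℕ) :
    ((G.edgeFinset.filter fun e => mnd G e ≤ t ∧ t < mxd G e).card : ℝ)
      ≤ (Fintype.card V : ℝ) ^ 2 / 4 := by
  set A : Finset V := Finset.univ.filter fun v => G.degree v ≤ t with hA
  set B : Finset V := Finset.univ.filter fun v => ¬ G.degree v ≤ t with hB
  set F : Sym2 V → V × V := fun e => if G.degree e.out.1 ≤ t then e.out else e.out.swap with hF
  have hmk : ∀ e : Sym2 V, Sym2.mk e.out.1 e.out.2 = e := fun e => e.out_eq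
  have hmnd : ∀ e : Sym2 V, mnd G e = min (G.degree e.out.1) (G.degree e.out.2) := by
    intro e
    conv_lhs => rw [← hmk e]
    rfl
  have hmxd : ∀ e : Sym2 V, mxd G e = max (G.degree e.out.1) (G.degree e.out.2) := by
    intro e
    conv_lhs => rw [← hmk e]
    rfl
  have hkey : ∀ e ∈ G.edgeFinset.filter fun e => mnd G e ≤ t ∧ t < mxd G e,
      Sym2.mk (F e).1 (F e).2 = e := by
    intro e _
    by_cases h : G.degree e.out.1 ≤ t
    · simp [hF, h, hmk e]
    · simp only [hF, if_neg h, Prod.fst_swap, Prod.snd_swap]; rw [Sym2.eq_swap]; exact hmk e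
  have hmaps : ∀ e ∈ G.edgeFinset.filter fun e => mnd G e ≤ t ∧ t < mxd G e,
      F e ∈ A ×ˢ B := by
    intro e he
    obtain ⟨-, h1, h2⟩ := Finset.mem_filter.mp he
    rw [hmnd] at h1
    rw [hmxd] at h2
    by_cases h : G.degree e.out.1 ≤ t
    · have h2' : ¬ G.degree e.out.2 ≤ t := by omega
      have hFe : F e = e.out := by rw [hF]; dsimp only; rw [if_pos h]
      rw [hFe, Finset.mem_product]
      exact ⟨by simp [hA, h], by simp [hB]; omega⟩
    · have h1' : G.degree e.out.2 ≤ t := by omega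
      have hFe : F e = e.out.swap := by rw [hF]; dsimp only; rw [if_neg h]
      rw [hFe, Finset.mem_product]
      exact ⟨by simp [hA, Prod.fst_swap, h1'], by simp [hB, Prod.snd_swap]; omega⟩
  have hinj : Set.InjOn F (G.edgeFinset.filter fun e => mnd G e ≤ t ∧ t < mxd G e) := by
    intro e1 h1 e2 h2 h
    rw [← hkey e1 h1, ← hkey e2 h2, h]
  have hle := Finset.card_le_card_of_injOn F hmaps hinj
  have hAB : A.card + B.card = Fintype.card V := by
    rw [hA, hB]
    rw [Finset.card_filter_add_card_filter_not]
    exact Finset.card_univ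
  have := Finset.card_product A B
  have h1 : ((G.edgeFinset.filter fun e => mnd G e ≤ t ∧ t < mxd G e).card : ℝ)
      ≤ (A.card : ℝ) * B.card := by
    rw [← Nat.cast_mul, ← this]
    exact_mod_cast hle
  have h2 : (A.card : ℝ) + B.card = Fintype.card V := by exact_mod_cast hAB
  nlinarith [sq_nonneg ((A.card : ℝ) - B.card)]

theorem stmt_3 {n k : ℕ} (hnk : n ≤ 2 * k) (hkn : k + 2 ≤ n)
    {V : Type*} [Fintype V] (G : SimpleGraph V)
    (hcard : Fintype.card V = n) (hconn : G.Connected)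
    (hmin : ∀ v : V, k ≤ G.degree v) :
    (n : ℝ) / 2 - (n : ℝ) ^ 2 / 8 * (1 / k - 1 / ((n : ℝ) - 1)) ≤ Rvar G := by
  have hk2 : 2 ≤ k := by omega
  have hn4 : 4 ≤ n := by omega
  have hdub : ∀ v : V, G.degree v ≤ n - 1 := by
    intro v
    have := G.degree_lt_card_verts v
    omega
  -- pointwise identity on edges
  have hsplit : ∀ e : Sym2 V,
      Sym2.lift ⟨fun u v => (1 : ℝ) / (max (G.degree u) (G.degree v) : ℕ),
        fun u v => by dsimp only; rw [max_comm]⟩ e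
      = (Sym2.lift ⟨fun u v => (1 : ℝ) / (G.degree u) + 1 / (G.degree v),
          fun u v => by dsimp only; ring⟩ e) / 2
        - ((1 : ℝ) / (mnd G e) - 1 / (mxd G e)) / 2 := by
    refine Sym2.ind (fun u v => ?_)
    simp only [Sym2.lift_mk, mnd, mxd]
    rcases le_total (G.degree u) (G.degree v) with h | h
    · rw [max_eq_right h, min_eq_left h]; ring
    · rw [max_eq_left h, min_eq_right h]; ring
  have hRvar : Rvar G = (n : ℝ) / 2
      - (∑ e ∈ G.edgeFinset, ((1 : ℝ) / (mnd G e) - 1 / (mxd G e))) / 2 := by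
    rw [Rvar, Finset.sum_congr rfl (fun e _ => hsplit e), Finset.sum_sub_distrib,
      ← Finset.sum_div, ← Finset.sum_div, sum_edge_weights G (fun v => 1 / (G.degree v : ℝ))]
    congr 2
    have : ∀ v : V, (G.degree v : ℝ) * (1 / (G.degree v : ℝ)) = 1 := by
      intro v
      have : (0 : ℝ) < G.degree v := by
        have := hmin v
        exact_mod_cast Nat.lt_of_lt_of_le (by omega) this
      field_simp
    rw [Finset.sum_congr rfl fun v _ => this v, Finset.sum_const, Finset.card_univ, hcard,
      nsmul_eq_mul, mul_one]
  -- bounds on mnd / mxd for edges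
  have hbounds : ∀ e ∈ G.edgeFinset, k ≤ mnd G e ∧ mxd G e ≤ n - 1 ∧ mnd G e ≤ mxd G e := by
    intro e _
    induction e using Sym2.ind with
    | _ u v =>
      refine ⟨le_min (hmin u) (hmin v), max_le (hdub u) (hdub v), min_le_max⟩
  set f : ℕ → ℝ := fun t => 1 / (t : ℝ) with hf
  -- the key sum bound
  have hS : ∑ e ∈ G.edgeFinset, ((1 : ℝ) / (mnd G e) - 1 / (mxd G e))
      ≤ (n : ℝ) ^ 2 / 4 * (f k - f (n - 1)) := by
    have step1 : ∀ e ∈ G.edgeFinset,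
        (1 : ℝ) / (mnd G e) - 1 / (mxd G e)
        = ∑ t ∈ Finset.Ico k (n - 1),
            (if mnd G e ≤ t ∧ t < mxd G e then f t - f (t + 1) else 0) := by
      intro e he
      obtain ⟨hb1, hb2, hb3⟩ := hbounds e he
      rw [← Finset.sum_filter]
      have hfilter : (Finset.Ico k (n - 1)).filter (fun t => mnd G e ≤ t ∧ t < mxd G e)
          = Finset.Ico (mnd G e) (mxd G e) := by
        ext t
        simp only [Finset.mem_filter, Finset.mem_Ico]
        omega
      rw [hfilter, telescope_aux f hb3]
    rw [Finset.sum_congr rfl step1, Finset.sum_comm]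
    have step2 : ∀ t ∈ Finset.Ico k (n - 1),
        ∑ e ∈ G.edgeFinset, (if mnd G e ≤ t ∧ t < mxd G e then f t - f (t + 1) else 0)
        ≤ (n : ℝ) ^ 2 / 4 * (f t - f (t + 1)) := by
      intro t ht
      rw [Finset.mem_Ico] at ht
      have hpos : (0 : ℝ) < t := by
        have := ht.1
        exact_mod_cast Nat.lt_of_lt_of_le (by omega : 0 < k) this
      have hmono : (0 : ℝ) ≤ f t - f (t + 1) := by
        have : f (t + 1) ≤ f t := by
          apply one_div_le_one_div_of_le hpos
          exact_mod_cast Nat.le_succ t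
        linarith
      rw [← Finset.sum_filter, Finset.sum_const, nsmul_eq_mul]
      have hcut := cut_card_le G t
      rw [hcard] at hcut
      exact mul_le_mul_of_nonneg_right hcut hmono
    calc ∑ t ∈ Finset.Ico k (n - 1),
          ∑ e ∈ G.edgeFinset, (if mnd G e ≤ t ∧ t < mxd G e then f t - f (t + 1) else 0)
        ≤ ∑ t ∈ Finset.Ico k (n - 1), (n : ℝ) ^ 2 / 4 * (f t - f (t + 1)) :=
          Finset.sum_le_sum step2
      _ = (n : ℝ) ^ 2 / 4 * (f k - f (n - 1)) := by
          rw [← Finset.mul_sum, telescope_aux f (by omega : k ≤ n - 1)]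
  rw [hRvar]
  have hcast : (f (n - 1) : ℝ) = 1 / ((n : ℝ) - 1) := by
    rw [hf]
    congr 1
    push_cast [Nat.cast_sub (by omega : 1 ≤ n)]
    ring
  have hfk : f k = 1 / (k : ℝ) := rfl
  rw [hcast, hfk] at hS
  linarith
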